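/- On the doubly infinite Sierpinski gasket graph SG with α = log 3 / log 2, for every 1/n < ε < 1 the annulus satisfies |B_o(n)| − |B_o(n(1−ε))| ≤ 4 ε^{α−1} |B_o(n)|, where B_o(r) denotes the open ball of radius r centered at the origin in the graph metric. -/

import Mathlib

open Finset

attribute [local instance] Classical.propDecidable

namespace IDLA

noncomputable section

/-- Translate a set of points in the plane. -/
def trSet (a : ℝ × ℝ) (S : Set (ℝ × ℝ)) : Set (ℝ × ℝ) := (fun p => a + p) '' S

/-- Vertices of the level-`n` Sierpinski gasket graph. -/
def gasketV : ℕ → Set (ℝ × ℝ)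
  | 0 => {(0, 0), (1, 0), (1 / 2, Real.sqrt 3 / 2)}
  | n + 1 =>
      gasketV n ∪ trSet ((2 : ℝ) ^ n, 0) (gasketV n) ∪
        trSet ((2 : ℝ) ^ n / 2, (2 : ℝ) ^ n / 2 * Real.sqrt 3) (gasketV n)

/-- Edges of the level-`n` Sierpinski gasket graph. -/
def gasketE : ℕ → Set ((ℝ × ℝ) × (ℝ × ℝ))
  | 0 => {((0, 0), (1, 0)), ((0, 0), (1 / 2, Real.sqrt 3 / 2)),
      ((1, 0), (1 / 2, Real.sqrt 3 / 2))}
  | n + 1 =>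
      gasketE n ∪
        (fun e => (((2 : ℝ) ^ n, 0) + e.1, ((2 : ℝ) ^ n, 0) + e.2)) '' gasketE n ∪
        (fun e => (((2 : ℝ) ^ n / 2, (2 : ℝ) ^ n / 2 * Real.sqrt 3) + e.1,
          ((2 : ℝ) ^ n / 2, (2 : ℝ) ^ n / 2 * Real.sqrt 3) + e.2)) '' gasketE n

/-- Vertex set of the doubly infinite Sierpinski gasket graph. -/
def SGV : Set (ℝ × ℝ) := (⋃ n, gasketV n) ∪ (-(⋃ n, gasketV n))

/-- Edge set of the doubly infinite Sierpinski gasket graph. -/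
def SGE : Set ((ℝ × ℝ) × (ℝ × ℝ)) :=
  (⋃ n, gasketE n) ∪ ((fun e => (-e.1, -e.2)) '' ⋃ n, gasketE n)

/-- The doubly infinite Sierpinski gasket graph `SG`. -/
def SGGraph : SimpleGraph SGV :=
  SimpleGraph.fromRel fun x y => ((x : ℝ × ℝ), (y : ℝ × ℝ)) ∈ SGE

/-- The origin `o = (0,0)` of `SG`. -/
def oSG : SGV :=
  ⟨(0, 0), Or.inl (Set.mem_iUnion.mpr ⟨0, by simp [gasketV]⟩)⟩

end

noncomputable section AnnulusProof

/-! ### Basic geometry -/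

private lemma s3_pos : 0 < Real.sqrt 3 := Real.sqrt_pos.mpr (by norm_num)

private lemma s3_sq : Real.sqrt 3 * Real.sqrt 3 = 3 := Real.mul_self_sqrt (by norm_num)

/-- The linear functional measuring graph distance from the origin. -/
private def lf (p : ℝ × ℝ) : ℝ := p.1 + p.2 * Real.sqrt 3 / 3

private lemma lf_add (a p : ℝ × ℝ) : lf (a + p) = lf a + lf p := by
  simp only [lf, Prod.fst_add, Prod.snd_add]; ring

private lemma lf_neg (p : ℝ × ℝ) : lf (-p) = - lf p := by
  simp only [lf, Prod.fst_neg, Prod.snd_neg]; ring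

private lemma lf_rOff (n : ℕ) : lf ((2 : ℝ) ^ n, 0) = 2 ^ n := by simp [lf]

private lemma lf_tOff (n : ℕ) :
    lf ((2 : ℝ) ^ n / 2, (2 : ℝ) ^ n / 2 * Real.sqrt 3) = 2 ^ n := by
  simp only [lf]
  linear_combination ((2:ℝ) ^ n / 6) * s3_sq

private lemma lf_origin : lf (0, 0) = 0 := by simp [lf]

private lemma lf_one : lf (1, 0) = 1 := by simp [lf]

private lemma lf_half : lf (1 / 2, Real.sqrt 3 / 2) = 1 := by
  simp only [lf]
  linear_combination (1 / 6 : ℝ) * s3_sq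

/-- Cone bounds for the level-`j` gasket. -/
private lemma gasketV_cone {j : ℕ} {p : ℝ × ℝ} (hp : p ∈ gasketV j) :
    0 ≤ p.2 ∧ p.2 * Real.sqrt 3 ≤ 3 * p.1 ∧ lf p ≤ 2 ^ j := by
  induction j generalizing p with
  | zero =>
    rcases hp with h | h | h
    · subst h; refine ⟨le_refl _, by norm_num, by rw [lf_origin]; norm_num⟩
    · subst h; refine ⟨le_refl _, by norm_num, by rw [lf_one]; norm_num⟩
    · rw [Set.mem_singleton_iff] at h; subst h
      refine ⟨by positivity, ?_, by rw [lf_half]; norm_num⟩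
      have := s3_sq; nlinarith [s3_pos]
  | succ n ih =>
    rcases hp with (h | ⟨q, hq, rfl⟩) | ⟨q, hq, rfl⟩
    · obtain ⟨h1, h2, h3⟩ := ih h
      exact ⟨h1, h2, by calc lf p ≤ 2 ^ n := h3
                          _ ≤ 2 ^ (n+1) := by norm_num [pow_succ]⟩
    · obtain ⟨h1, h2, h3⟩ := ih hq
      have hpos : (0:ℝ) < 2 ^ n := by positivity
      have e1 : (((2:ℝ)^n, (0:ℝ)) + q).1 = 2^n + q.1 := rfl
      have e2 : (((2:ℝ)^n, (0:ℝ)) + q).2 = q.2 := by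
        show 0 + q.2 = q.2; ring
      refine ⟨by rw [e2]; exact h1, by rw [e1, e2]; linarith, ?_⟩
      rw [lf_add, lf_rOff]
      have : (2:ℝ) ^ (n+1) = 2 ^ n + 2 ^ n := by ring
      linarith
    · obtain ⟨h1, h2, h3⟩ := ih hq
      have hpos : (0:ℝ) < 2 ^ n := by positivity
      have e1 : (((2:ℝ)^n/2, (2:ℝ)^n/2 * Real.sqrt 3) + q).1 = 2^n/2 + q.1 := rfl
      have e2 : (((2:ℝ)^n/2, (2:ℝ)^n/2 * Real.sqrt 3) + q).2 = 2^n/2 * Real.sqrt 3 + q.2 := rfl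
      refine ⟨?_, ?_, ?_⟩
      · rw [e2]; nlinarith [s3_pos]
      · rw [e1, e2]; nlinarith [s3_sq, s3_pos]
      · rw [lf_add, lf_tOff]
        have : (2:ℝ) ^ (n+1) = 2 ^ n + 2 ^ n := by ring
        linarith

private lemma gasketV_lf_nonneg {j : ℕ} {p : ℝ × ℝ} (hp : p ∈ gasketV j) : 0 ≤ lf p := by
  obtain ⟨h1, h2, _⟩ := gasketV_cone hp
  have hx : 0 ≤ p.1 := by nlinarith [s3_pos]
  have hy : 0 ≤ p.2 * Real.sqrt 3 / 3 := by positivity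
  simp only [lf]; linarith

/-- Monotonicity. -/
private lemma gasketV_mono : Monotone gasketV := by
  apply monotone_nat_of_le_succ
  intro n p hp
  exact Or.inl (Or.inl hp)

private lemma gasketE_mono : Monotone gasketE := by
  apply monotone_nat_of_le_succ
  intro n e he
  exact Or.inl (Or.inl he)

/-- Corners. -/
private lemma bcorner_mem (j : ℕ) : ((2 : ℝ) ^ j, (0:ℝ)) ∈ gasketV j := by
  induction j with
  | zero => exact Or.inr (Or.inl rfl)
  | succ n ih =>
    refine Or.inl (Or.inr ⟨((2:ℝ)^n, 0), ih, ?_⟩)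
    simp only [Prod.mk_add_mk, Prod.mk.injEq]
    constructor
    · ring
    · ring

private lemma ccorner_mem (j : ℕ) :
    ((2 : ℝ) ^ j / 2, (2 : ℝ) ^ j / 2 * Real.sqrt 3) ∈ gasketV j := by
  induction j with
  | zero =>
    refine Or.inr (Or.inr ?_)
    rw [Set.mem_singleton_iff, Prod.ext_iff]
    norm_num
    ring
  | succ n ih =>
    refine Or.inr ⟨((2:ℝ)^n/2, (2:ℝ)^n/2 * Real.sqrt 3), ih, ?_⟩
    simp only [Prod.mk_add_mk, Prod.mk.injEq]
    constructor
    · ring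
    · ring

private lemma origin_mem (j : ℕ) : ((0:ℝ), (0:ℝ)) ∈ gasketV j := by
  have h0 : ((0:ℝ),(0:ℝ)) ∈ gasketV 0 := Or.inl rfl
  exact gasketV_mono (Nat.zero_le j) h0

/-- Finiteness. -/
private lemma gasketV_finite (j : ℕ) : (gasketV j).Finite := by
  induction j with
  | zero =>
    show ({((0:ℝ),(0:ℝ)), (1,0), (1/2, Real.sqrt 3/2)} : Set (ℝ×ℝ)).Finite
    exact (Set.finite_singleton _).insert _ |>.insert _
  | succ n ih =>
    exact ((ih.union (ih.image _)).union (ih.image _))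

/-! ### Cell intersections and counting -/

private lemma mem_trSet {a z : ℝ × ℝ} {S : Set (ℝ × ℝ)} :
    z ∈ trSet a S ↔ ∃ u ∈ S, a + u = z :=
  Set.mem_image _ _ _

private lemma trSet_ncard (a : ℝ × ℝ) (S : Set (ℝ × ℝ)) :
    (trSet a S).ncard = S.ncard :=
  Set.ncard_image_of_injective S (add_right_injective a)

private lemma trSet_finite (a : ℝ × ℝ) {S : Set (ℝ × ℝ)} (h : S.Finite) :
    (trSet a S).Finite := h.image _

/-- `A ∩ (A + (2^j,0)) = {(2^j,0)}`. -/
private lemma interAB (j : ℕ) :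
    gasketV j ∩ trSet ((2:ℝ)^j, 0) (gasketV j) = {((2:ℝ)^j, 0)} := by
  apply Set.eq_singleton_iff_unique_mem.mpr
  constructor
  · exact ⟨bcorner_mem j, mem_trSet.mpr ⟨(0,0), origin_mem j, by simp⟩⟩
  · rintro z ⟨hzA, hzB⟩
    obtain ⟨u, hu, huz⟩ := mem_trSet.mp hzB
    obtain ⟨cu1, cu2, _⟩ := gasketV_cone hu
    obtain ⟨cz1, cz2, cz3⟩ := gasketV_cone hzA
    have hz1 : z.1 = 2^j + u.1 := by rw [← huz]; rfl
    have hz2 : z.2 = u.2 := by rw [← huz]; simp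
    simp only [lf] at cz3
    have hu1 : 0 ≤ u.1 := by nlinarith [s3_pos]
    have hz2' : z.2 = 0 := by nlinarith [s3_pos]
    have hu2 : u.2 = 0 := by rw [hz2] at hz2'; exact hz2'
    have hu1' : u.1 = 0 := by
      rw [hz2'] at cz3
      rw [hz1] at cz3
      nlinarith
    have : u = (0, 0) := Prod.ext hu1' hu2
    rw [this] at huz
    rw [← huz]; simp

/-- `A ∩ (A + t_j) = {t_j}`. -/
private lemma interAC (j : ℕ) :
    gasketV j ∩ trSet ((2:ℝ)^j/2, (2:ℝ)^j/2 * Real.sqrt 3) (gasketV j)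
      = {((2:ℝ)^j/2, (2:ℝ)^j/2 * Real.sqrt 3)} := by
  apply Set.eq_singleton_iff_unique_mem.mpr
  constructor
  · exact ⟨ccorner_mem j, mem_trSet.mpr ⟨(0,0), origin_mem j, by simp⟩⟩
  · rintro z ⟨hzA, hzC⟩
    obtain ⟨u, hu, huz⟩ := mem_trSet.mp hzC
    obtain ⟨cu1, cu2, _⟩ := gasketV_cone hu
    obtain ⟨cz1, cz2, cz3⟩ := gasketV_cone hzA
    have hz1 : z.1 = 2^j/2 + u.1 := by rw [← huz]; rfl
    have hz2 : z.2 = 2^j/2 * Real.sqrt 3 + u.2 := by rw [← huz]; rfl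
    simp only [lf] at cz3
    have hu2 : u.2 = 0 := by nlinarith [s3_pos, s3_sq]
    have hu1 : u.1 = 0 := by nlinarith [s3_pos, s3_sq]
    have : u = (0, 0) := Prod.ext hu1 hu2
    rw [this] at huz
    rw [← huz]; simp

/-- `(A + (2^j,0)) ∩ (A + t_j) = {(2^j,0) + t_j}`. -/
private lemma interBC (j : ℕ) :
    trSet ((2:ℝ)^j, 0) (gasketV j) ∩
      trSet ((2:ℝ)^j/2, (2:ℝ)^j/2 * Real.sqrt 3) (gasketV j)
      = {((2:ℝ)^j, 0) + ((2:ℝ)^j/2, (2:ℝ)^j/2 * Real.sqrt 3)} := by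
  apply Set.eq_singleton_iff_unique_mem.mpr
  constructor
  · constructor
    · exact mem_trSet.mpr ⟨((2:ℝ)^j/2, (2:ℝ)^j/2 * Real.sqrt 3), ccorner_mem j, rfl⟩
    · refine mem_trSet.mpr ⟨((2:ℝ)^j, 0), bcorner_mem j, ?_⟩
      rw [add_comm]
  · rintro z ⟨hzB, hzC⟩
    obtain ⟨u, hu, huz⟩ := mem_trSet.mp hzB
    obtain ⟨v, hv, hvz⟩ := mem_trSet.mp hzC
    obtain ⟨cu1, cu2, _⟩ := gasketV_cone hu
    obtain ⟨cv1, cv2, cv3⟩ := gasketV_cone hv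
    simp only [lf] at cv3
    have hz1 : z.1 = 2^j + u.1 := by rw [← huz]; rfl
    have hz2 : z.2 = u.2 := by rw [← huz]; simp
    have hz1' : z.1 = 2^j/2 + v.1 := by rw [← hvz]; rfl
    have hz2' : z.2 = 2^j/2 * Real.sqrt 3 + v.2 := by rw [← hvz]; rfl
    -- key: z.1 - z.2*√3/3 is ≥ 2^j from u-side, ≤ 2^j from v-side
    have hv2 : v.2 = 0 := by nlinarith [s3_pos, s3_sq]
    have hv1 : v.1 = 2^j := by nlinarith [s3_pos, s3_sq]
    have : v = ((2:ℝ)^j, 0) := Prod.ext hv1 hv2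
    rw [this] at hvz
    rw [← hvz]
    rw [add_comm]

private lemma gasketV0_ncard : (gasketV 0).ncard = 3 := by
  have : (gasketV 0) = {((0:ℝ),(0:ℝ)), (1,0), (1/2, Real.sqrt 3/2)} := rfl
  rw [this, Set.ncard_eq_three]
  refine ⟨_, _, _, ?_, ?_, ?_, rfl⟩
  · intro h; have h1 : (0:ℝ) = 1 := congrArg Prod.fst h; norm_num at h1
  · intro h; have h1 : (0:ℝ) = 1/2 := congrArg Prod.fst h; norm_num at h1
  · intro h; have h1 : (1:ℝ) = 1/2 := congrArg Prod.fst h; norm_num at h1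

private lemma gasketV_ncard (j : ℕ) : 2 * (gasketV j).ncard = 3^(j+1) + 3 := by
  induction j with
  | zero => rw [gasketV0_ncard]; norm_num
  | succ n ih =>
    have hA := gasketV_finite n
    have hB := trSet_finite ((2:ℝ)^n, 0) hA
    have hC := trSet_finite ((2:ℝ)^n/2, (2:ℝ)^n/2 * Real.sqrt 3) hA
    have h1 : (gasketV n ∪ trSet ((2:ℝ)^n, 0) (gasketV n)).ncard
        = 2 * (gasketV n).ncard - 1 := by
      have := Set.ncard_union_add_ncard_inter (gasketV n)
        (trSet ((2:ℝ)^n, 0) (gasketV n)) hA hB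
      rw [interAB n, Set.ncard_singleton, trSet_ncard] at this
      omega
    have h2 : ((gasketV n ∪ trSet ((2:ℝ)^n, 0) (gasketV n)) ∩
        trSet ((2:ℝ)^n/2, (2:ℝ)^n/2 * Real.sqrt 3) (gasketV n)).ncard = 2 := by
      rw [Set.union_inter_distrib_right, interAC n, interBC n, Set.singleton_union]
      rw [Set.ncard_pair]
      intro h
      have h1 : (2:ℝ)^n/2 = 2^n + 2^n/2 := congrArg Prod.fst h
      have hp : (0:ℝ) < 2^n := by positivity
      linarith
    have h3 := Set.ncard_union_add_ncard_inter
      (gasketV n ∪ trSet ((2:ℝ)^n, 0) (gasketV n))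
      (trSet ((2:ℝ)^n/2, (2:ℝ)^n/2 * Real.sqrt 3) (gasketV n)) (hA.union hB) hC
    rw [h1, h2, trSet_ncard] at h3
    show 2 * (gasketV n ∪ trSet ((2:ℝ)^n, 0) (gasketV n) ∪
      trSet ((2:ℝ)^n/2, (2:ℝ)^n/2 * Real.sqrt 3) (gasketV n)).ncard = 3^(n+2) + 3
    have hVn1 : 0 < (gasketV n).ncard :=
      (Set.ncard_pos hA).mpr ⟨_, origin_mem n⟩
    have hp3 : (3:ℕ)^(n+2) = 3 * 3^(n+1) := by ring
    omega

/-! ### The counting function -/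

private def Pset : Set (ℝ × ℝ) := ⋃ n, gasketV n

private lemma Pset_lf_nonneg {p : ℝ × ℝ} (hp : p ∈ Pset) : 0 ≤ lf p := by
  obtain ⟨_, ⟨m, rfl⟩, hm⟩ := hp
  exact gasketV_lf_nonneg hm

private lemma mem_level_of_lf_lt {j m : ℕ} {p : ℝ × ℝ} (hp : p ∈ gasketV m)
    (h : lf p < 2 ^ j) : p ∈ gasketV j := by
  induction m with
  | zero => exact gasketV_mono (Nat.zero_le j) hp
  | succ n ih =>
    by_cases hnj : n + 1 ≤ j
    · exact gasketV_mono hnj hp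
    · have hjn : j ≤ n := by omega
      have hpow : (2:ℝ)^j ≤ 2^n := by
        apply pow_le_pow_right₀ (by norm_num) hjn
      rcases hp with (h' | ⟨q, hq, rfl⟩) | ⟨q, hq, rfl⟩
      · exact ih h'
      · exfalso
        have := gasketV_lf_nonneg hq
        rw [lf_add, lf_rOff] at h
        linarith
      · exfalso
        have := gasketV_lf_nonneg hq
        rw [lf_add, lf_tOff] at h
        linarith

/-- Points of the gasket with `lf < r`. -/
private def Lam (r : ℝ) : Set (ℝ × ℝ) := {p ∈ Pset | lf p < r}

private lemma Lam_subset {j : ℕ} {r : ℝ} (h : r ≤ 2 ^ j) : Lam r ⊆ gasketV j := by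
  rintro p ⟨hp, hlt⟩
  obtain ⟨_, ⟨m, rfl⟩, hm⟩ := hp
  exact mem_level_of_lf_lt hm (lt_of_lt_of_le hlt h)

private lemma exists_pow_ge (r : ℝ) : ∃ j : ℕ, r ≤ 2 ^ j := by
  obtain ⟨j, hj⟩ := pow_unbounded_of_one_lt r (by norm_num : (1:ℝ) < 2)
  exact ⟨j, le_of_lt hj⟩

private lemma Lam_finite (r : ℝ) : (Lam r).Finite := by
  obtain ⟨j, hj⟩ := exists_pow_ge r
  exact (gasketV_finite j).subset (Lam_subset hj)

/-- The ball-counting function. -/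
private def Lf (r : ℝ) : ℕ := (Lam r).ncard

private lemma Lf_mono {r r' : ℝ} (h : r ≤ r') : Lf r ≤ Lf r' := by
  apply Set.ncard_le_ncard _ (Lam_finite r')
  rintro p ⟨hp, hlt⟩
  exact ⟨hp, lt_of_lt_of_le hlt h⟩

private lemma Lf_nonpos {r : ℝ} (h : r ≤ 0) : Lf r = 0 := by
  have : Lam r = ∅ := by
    ext p
    simp only [Lam, Set.mem_setOf_eq, Set.mem_empty_iff_false, iff_false, not_and]
    intro hp hlt
    exact absurd hlt (not_lt.mpr (le_trans h (Pset_lf_nonneg hp)))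
  rw [Lf, this, Set.ncard_empty]

private lemma origin_mem_Pset : ((0:ℝ),(0:ℝ)) ∈ Pset :=
  Set.mem_iUnion.mpr ⟨0, origin_mem 0⟩

private lemma Lf_unit {r : ℝ} (h0 : 0 < r) (h1 : r ≤ 1) : Lf r = 1 := by
  have : Lam r = {((0:ℝ), (0:ℝ))} := by
    apply Set.eq_singleton_iff_unique_mem.mpr
    constructor
    · exact ⟨origin_mem_Pset, by rw [lf_origin]; exact h0⟩
    · rintro p hp
      have hp0 : p ∈ gasketV 0 := Lam_subset (by simpa using h1) hp
      obtain ⟨-, hlt⟩ := hp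
      rcases hp0 with h' | h' | h'
      · exact h'
      · exfalso; rw [h', lf_one] at hlt; linarith
      · exfalso; rw [Set.mem_singleton_iff] at h'; rw [h', lf_half] at hlt; linarith
  rw [Lf, this, Set.ncard_singleton]

/-- Key recursion for the counting function. -/
private lemma Lf_rec {j : ℕ} {r : ℝ} (h1 : 2 ^ j < r) (h2 : r ≤ 2 ^ (j + 1)) :
    Lf r + 2 = (gasketV j).ncard + 2 * Lf (r - 2 ^ j) := by
  set rj : ℝ × ℝ := ((2:ℝ)^j, 0) with hrj
  set tj : ℝ × ℝ := ((2:ℝ)^j/2, (2:ℝ)^j/2 * Real.sqrt 3) with htj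
  have hsub' : Lam (r - 2^j) ⊆ gasketV j := by
    apply Lam_subset; have : (2:ℝ)^(j+1) = 2^j + 2^j := by ring
    linarith
  have hsplit : Lam r = gasketV j ∪ trSet rj (Lam (r - 2^j)) ∪ trSet tj (Lam (r - 2^j)) := by
    ext p
    constructor
    · rintro hp
      have hpj : p ∈ gasketV (j+1) := Lam_subset h2 hp
      obtain ⟨-, hlt⟩ := hp
      rcases hpj with (h' | ⟨q, hq, rfl⟩) | ⟨q, hq, rfl⟩
      · exact Or.inl (Or.inl h')
      · refine Or.inl (Or.inr (mem_trSet.mpr ⟨q, ⟨Set.mem_iUnion.mpr ⟨j, hq⟩, ?_⟩, rfl⟩))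
        rw [lf_add, lf_rOff] at hlt; linarith
      · refine Or.inr (mem_trSet.mpr ⟨q, ⟨Set.mem_iUnion.mpr ⟨j, hq⟩, ?_⟩, rfl⟩)
        rw [lf_add, lf_tOff] at hlt; linarith
    · rintro ((h' | h') | h')
      · exact ⟨Set.mem_iUnion.mpr ⟨j, h'⟩, lt_of_le_of_lt (gasketV_cone h').2.2 h1⟩
      · obtain ⟨q, ⟨hqP, hql⟩, rfl⟩ := mem_trSet.mp h'
        refine ⟨Set.mem_iUnion.mpr ⟨j+1, Or.inl (Or.inr (mem_trSet.mpr ⟨q, ?_, rfl⟩))⟩, ?_⟩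
        · exact hsub' ⟨hqP, hql⟩
        · rw [lf_add, lf_rOff]; linarith
      · obtain ⟨q, ⟨hqP, hql⟩, rfl⟩ := mem_trSet.mp h'
        refine ⟨Set.mem_iUnion.mpr ⟨j+1, Or.inr (mem_trSet.mpr ⟨q, ?_, rfl⟩)⟩, ?_⟩
        · exact hsub' ⟨hqP, hql⟩
        · rw [lf_add, lf_tOff]; linarith
  -- intersections
  have hr0 : (0:ℝ) < r - 2^j := by linarith
  have horig : ((0:ℝ),(0:ℝ)) ∈ Lam (r - 2^j) := ⟨origin_mem_Pset, by rw [lf_origin]; linarith⟩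
  have hAB : gasketV j ∩ trSet rj (Lam (r - 2^j)) = {rj} := by
    apply Set.Subset.antisymm
    · intro z hz
      have : z ∈ gasketV j ∩ trSet rj (gasketV j) :=
        ⟨hz.1, Set.image_mono hsub' hz.2⟩
      rw [interAB j] at this; exact this
    · intro z hz
      rw [Set.mem_singleton_iff] at hz; subst hz
      exact ⟨bcorner_mem j, mem_trSet.mpr ⟨(0,0), horig, by simp⟩⟩
  have hAC : gasketV j ∩ trSet tj (Lam (r - 2^j)) = {tj} := by
    apply Set.Subset.antisymm
    · intro z hz
      have : z ∈ gasketV j ∩ trSet tj (gasketV j) :=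
        ⟨hz.1, Set.image_mono hsub' hz.2⟩
      rw [interAC j] at this; exact this
    · intro z hz
      rw [Set.mem_singleton_iff] at hz; subst hz
      exact ⟨ccorner_mem j, mem_trSet.mpr ⟨(0,0), horig, by simp⟩⟩
  have hBC : trSet rj (Lam (r - 2^j)) ∩ trSet tj (Lam (r - 2^j)) = ∅ := by
    rw [Set.eq_empty_iff_forall_notMem]
    intro z ⟨hzB, hzC⟩
    have hmem : z ∈ trSet rj (gasketV j) ∩ trSet tj (gasketV j) :=
      ⟨Set.image_mono hsub' hzB, Set.image_mono hsub' hzC⟩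
    rw [interBC j] at hmem
    rw [Set.mem_singleton_iff] at hmem
    obtain ⟨q, ⟨hqP, hql⟩, hqz⟩ := mem_trSet.mp hzB
    rw [hmem] at hqz
    have hq : q = tj := by
      have := add_left_cancel hqz
      exact this
    rw [hq, htj, lf_tOff] at hql
    have : (2:ℝ)^(j+1) = 2^j + 2^j := by ring
    linarith
  -- cardinalities
  have hfin' : (Lam (r - 2^j)).Finite := Lam_finite _
  have hfinA : (gasketV j).Finite := gasketV_finite j
  have hfinB : (trSet rj (Lam (r - 2^j))).Finite := trSet_finite _ hfin'
  have hfinC : (trSet tj (Lam (r - 2^j))).Finite := trSet_finite _ hfin'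
  have h1' := Set.ncard_union_add_ncard_inter (gasketV j) (trSet rj (Lam (r - 2^j))) hfinA hfinB
  rw [hAB, Set.ncard_singleton, trSet_ncard] at h1'
  have h2' := Set.ncard_union_add_ncard_inter (gasketV j ∪ trSet rj (Lam (r - 2^j)))
    (trSet tj (Lam (r - 2^j))) (hfinA.union hfinB) hfinC
  rw [Set.union_inter_distrib_right, hAC, hBC, Set.union_empty, Set.ncard_singleton,
    trSet_ncard] at h2'
  have hL : Lf r = (gasketV j ∪ trSet rj (Lam (r - 2^j)) ∪ trSet tj (Lam (r - 2^j))).ncard := by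
    rw [Lf, hsplit]
  rw [hL]
  have hA1 : 0 < (gasketV j).ncard := (Set.ncard_pos hfinA).mpr ⟨_, origin_mem j⟩
  have hB1 : 0 < Lf (r - 2^j) := by
    rw [Lf]
    exact (Set.ncard_pos hfin').mpr ⟨_, horig⟩
  show _ + 2 = _ + 2 * Lf (r - 2^j)
  rw [Lf] at hB1 ⊢
  omega

/-- Values at powers of two: `2·Lf(2^j) = 3^(j+1) − 2^(j+1) + 1`. -/
private lemma Lf_pow (j : ℕ) : 2 * Lf ((2:ℝ)^j) + 2^(j+1) = 3^(j+1) + 1 := by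
  induction j with
  | zero =>
    have : Lf ((2:ℝ)^0) = 1 := Lf_unit (by norm_num) (by norm_num)
    rw [this]; norm_num
  | succ n ih =>
    have hrec := Lf_rec (j := n) (r := (2:ℝ)^(n+1)) (by
      have : (2:ℝ)^(n+1) = 2^n + 2^n := by ring
      have hp : (0:ℝ) < 2^n := by positivity
      linarith) (le_refl _)
    have he : (2:ℝ)^(n+1) - 2^n = 2^n := by ring
    rw [he] at hrec
    have hcard := gasketV_ncard n
    -- hrec : Lf (2^(n+1)) + 2 = (gasketV n).ncard + 2 * Lf (2^n)
    -- ih : 2 * Lf (2^n) + 2^(n+1) = 3^(n+1) + 1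
    have hp2 : (2:ℕ)^(n+2) = 2 * 2^(n+1) := by ring
    have hp3 : (3:ℕ)^(n+2) = 3 * 3^(n+1) := by ring
    omega

/-! ### Graph distance equals the linear functional -/

private lemma gasketE_props {m : ℕ} {e : (ℝ×ℝ) × (ℝ×ℝ)} (he : e ∈ gasketE m) :
    e.1 ∈ gasketV m ∧ e.2 ∈ gasketV m ∧ e.1 ≠ e.2 ∧ |lf e.1 - lf e.2| ≤ 1 := by
  induction m generalizing e with
  | zero =>
    rcases he with h | h | h
    · subst h
      refine ⟨Or.inl rfl, Or.inr (Or.inl rfl), ?_, ?_⟩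
      · intro h; have h1 : (0:ℝ) = 1 := congrArg Prod.fst h; norm_num at h1
      · show |lf (0,0) - lf (1,0)| ≤ 1
        rw [lf_origin, lf_one]; norm_num
    · subst h
      refine ⟨Or.inl rfl, Or.inr (Or.inr rfl), ?_, ?_⟩
      · intro h; have h1 : (0:ℝ) = 1/2 := congrArg Prod.fst h; norm_num at h1
      · show |lf (0,0) - lf (1/2, Real.sqrt 3/2)| ≤ 1
        rw [lf_origin, lf_half]; norm_num
    · rw [Set.mem_singleton_iff] at h; subst h
      refine ⟨Or.inr (Or.inl rfl), Or.inr (Or.inr rfl), ?_, ?_⟩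
      · intro h; have h1 : (1:ℝ) = 1/2 := congrArg Prod.fst h; norm_num at h1
      · show |lf (1,0) - lf (1/2, Real.sqrt 3/2)| ≤ 1
        rw [lf_one, lf_half]; norm_num
  | succ n ih =>
    rcases he with (h | ⟨e', he', rfl⟩) | ⟨e', he', rfl⟩
    · obtain ⟨h1, h2, h3, h4⟩ := ih h
      exact ⟨gasketV_mono (Nat.le_succ n) h1, gasketV_mono (Nat.le_succ n) h2, h3, h4⟩
    · obtain ⟨h1, h2, h3, h4⟩ := ih he'
      refine ⟨Or.inl (Or.inr ⟨e'.1, h1, rfl⟩), Or.inl (Or.inr ⟨e'.2, h2, rfl⟩), ?_, ?_⟩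
      · intro h; exact h3 (add_left_cancel h)
      · show |lf (_ + e'.1) - lf (_ + e'.2)| ≤ 1
        rw [lf_add, lf_add]
        convert h4 using 2; ring
    · obtain ⟨h1, h2, h3, h4⟩ := ih he'
      refine ⟨Or.inr ⟨e'.1, h1, rfl⟩, Or.inr ⟨e'.2, h2, rfl⟩, ?_, ?_⟩
      · intro h; exact h3 (add_left_cancel h)
      · show |lf (_ + e'.1) - lf (_ + e'.2)| ≤ 1
        rw [lf_add, lf_add]
        convert h4 using 2; ring

private lemma SGE_lf {a b : ℝ × ℝ} (h : (a, b) ∈ SGE) : |lf a - lf b| ≤ 1 := by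
  rcases h with h | ⟨e', he', heq⟩
  · obtain ⟨_, ⟨m, rfl⟩, hm⟩ := h
    exact (gasketE_props hm).2.2.2
  · obtain ⟨_, ⟨m, rfl⟩, hm⟩ := he'
    have h4 := (gasketE_props hm).2.2.2
    have ha : -e'.1 = a := congrArg Prod.fst heq
    have hb : -e'.2 = b := congrArg Prod.snd heq
    rw [← ha, ← hb, lf_neg, lf_neg, ← abs_neg]
    convert h4 using 2; ring

private lemma adj_lf {x y : SGV} (h : SGGraph.Adj x y) : |lf x.val - lf y.val| ≤ 1 := by
  rw [SGGraph, SimpleGraph.fromRel_adj] at h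
  rcases h.2 with h' | h'
  · exact SGE_lf h'
  · rw [abs_sub_comm]; exact SGE_lf h'

private lemma walk_lf_bound {x y : SGV} (w : SGGraph.Walk x y) :
    |lf x.val - lf y.val| ≤ (w.length : ℝ) := by
  induction w with
  | nil => simp
  | @cons a b c hadj w ih =>
    rw [SimpleGraph.Walk.length_cons]
    have h1 := adj_lf hadj
    have htri : |lf a.val - lf c.val| ≤ |lf a.val - lf b.val| + |lf b.val - lf c.val| :=
      abs_sub_le _ _ _
    push_cast
    linarith

/-- Chains in the level-`m` gasket. -/
private inductive GW (m : ℕ) : ℝ × ℝ → ℝ × ℝ → ℕ → Prop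
  | nil (a : ℝ × ℝ) : GW m a a 0
  | cons {a b c : ℝ × ℝ} {n : ℕ} (h : GW m a b n)
      (he : (b, c) ∈ gasketE m ∨ (c, b) ∈ gasketE m) : GW m a c (n + 1)

private lemma GW_mono {m m' : ℕ} (hm : m ≤ m') {a b : ℝ × ℝ} {n : ℕ}
    (h : GW m a b n) : GW m' a b n := by
  induction h with
  | nil => exact GW.nil a
  | cons h he ih =>
    exact GW.cons ih (he.imp (fun h' => gasketE_mono hm h') (fun h' => gasketE_mono hm h'))

private lemma GW_trans {m : ℕ} {a b c : ℝ × ℝ} {n n' : ℕ}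
    (h1 : GW m a b n) (h2 : GW m b c n') : GW m a c (n + n') := by
  induction h2 with
  | nil => exact h1
  | cons h he ih => exact GW.cons ih he

private lemma GW_translate_r {m : ℕ} {a b : ℝ × ℝ} {n : ℕ} (h : GW m a b n) :
    GW (m + 1) (((2:ℝ)^m, 0) + a) (((2:ℝ)^m, 0) + b) n := by
  induction h with
  | nil => exact GW.nil _
  | @cons b c k h he ih =>
    refine GW.cons ih ?_
    rcases he with he | he
    · exact Or.inl (Or.inl (Or.inr ⟨(b, c), he, rfl⟩))
    · exact Or.inr (Or.inl (Or.inr ⟨(c, b), he, rfl⟩))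

private lemma GW_translate_t {m : ℕ} {a b : ℝ × ℝ} {n : ℕ} (h : GW m a b n) :
    GW (m + 1) (((2:ℝ)^m/2, (2:ℝ)^m/2 * Real.sqrt 3) + a)
      (((2:ℝ)^m/2, (2:ℝ)^m/2 * Real.sqrt 3) + b) n := by
  induction h with
  | nil => exact GW.nil _
  | @cons b c k h he ih =>
    refine GW.cons ih ?_
    rcases he with he | he
    · exact Or.inl (Or.inr ⟨(b, c), he, rfl⟩)
    · exact Or.inr (Or.inr ⟨(c, b), he, rfl⟩)

private lemma edge1_mem : (((0:ℝ),(0:ℝ)), ((1:ℝ),(0:ℝ))) ∈ gasketE 0 := Or.inl rfl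

private lemma edge2_mem : (((0:ℝ),(0:ℝ)), ((1:ℝ)/2, Real.sqrt 3/2)) ∈ gasketE 0 :=
  Or.inr (Or.inl rfl)

private lemma GW_bottom (j : ℕ) : GW j ((0:ℝ), (0:ℝ)) ((2:ℝ)^j, 0) (2^j) := by
  induction j with
  | zero =>
    have h := GW.cons (m := 0) (GW.nil ((0:ℝ),(0:ℝ))) (Or.inl edge1_mem)
    simpa using h
  | succ n ih =>
    have h1 : GW (n+1) ((0:ℝ),(0:ℝ)) ((2:ℝ)^n, 0) (2^n) := GW_mono (Nat.le_succ n) ih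
    have h2 := GW_translate_r ih
    have e1 : ((2:ℝ)^n, (0:ℝ)) + ((0:ℝ),(0:ℝ)) = ((2:ℝ)^n, 0) := by simp
    have e2 : ((2:ℝ)^n, (0:ℝ)) + ((2:ℝ)^n, (0:ℝ)) = ((2:ℝ)^(n+1), 0) := by
      rw [Prod.mk_add_mk]; norm_num; ring
    rw [e1, e2] at h2
    have := GW_trans h1 h2
    have hl : (2:ℕ)^n + 2^n = 2^(n+1) := by ring
    rwa [hl] at this

private lemma GW_left (j : ℕ) :
    GW j ((0:ℝ), (0:ℝ)) ((2:ℝ)^j/2, (2:ℝ)^j/2 * Real.sqrt 3) (2^j) := by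
  induction j with
  | zero =>
    have h := GW.cons (m := 0) (GW.nil ((0:ℝ),(0:ℝ))) (Or.inl edge2_mem)
    have e : ((2:ℝ)^0/2, (2:ℝ)^0/2 * Real.sqrt 3) = ((1:ℝ)/2, Real.sqrt 3/2) := by
      rw [Prod.mk.injEq]
      constructor
      · norm_num
      · rw [pow_zero]; ring
    rw [e]
    simpa using h
  | succ n ih =>
    have h1 : GW (n+1) ((0:ℝ),(0:ℝ)) ((2:ℝ)^n/2, (2:ℝ)^n/2 * Real.sqrt 3) (2^n) :=
      GW_mono (Nat.le_succ n) ih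
    have h2 := GW_translate_t ih
    have e1 : ((2:ℝ)^n/2, (2:ℝ)^n/2 * Real.sqrt 3) + ((0:ℝ),(0:ℝ))
        = ((2:ℝ)^n/2, (2:ℝ)^n/2 * Real.sqrt 3) := by simp
    have e2 : ((2:ℝ)^n/2, (2:ℝ)^n/2 * Real.sqrt 3) + ((2:ℝ)^n/2, (2:ℝ)^n/2 * Real.sqrt 3)
        = ((2:ℝ)^(n+1)/2, (2:ℝ)^(n+1)/2 * Real.sqrt 3) := by
      rw [Prod.mk_add_mk, Prod.mk.injEq]
      constructor <;> ring
    rw [e1, e2] at h2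
    have := GW_trans h1 h2
    have hl : (2:ℕ)^n + 2^n = 2^(n+1) := by ring
    rwa [hl] at this

/-- Every gasket vertex is reached by a chain of length exactly `lf p`. -/
private lemma GW_main {j : ℕ} {p : ℝ × ℝ} (hp : p ∈ gasketV j) :
    ∃ n : ℕ, GW j ((0:ℝ),(0:ℝ)) p n ∧ (n : ℝ) = lf p := by
  induction j generalizing p with
  | zero =>
    rcases hp with h | h | h
    · subst h; exact ⟨0, GW.nil _, by rw [lf_origin]; norm_num⟩
    · subst h
      exact ⟨1, GW.cons (GW.nil _) (Or.inl edge1_mem), by rw [lf_one]; norm_num⟩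
    · rw [Set.mem_singleton_iff] at h; subst h
      refine ⟨1, GW.cons (GW.nil _) (Or.inl edge2_mem), by rw [lf_half]; norm_num⟩
  | succ n ih =>
    rcases hp with (h | ⟨q, hq, rfl⟩) | ⟨q, hq, rfl⟩
    · obtain ⟨k, hk, hkl⟩ := ih h
      exact ⟨k, GW_mono (Nat.le_succ n) hk, hkl⟩
    · obtain ⟨k, hk, hkl⟩ := ih hq
      refine ⟨2^n + k, ?_, ?_⟩
      · have h1 : GW (n+1) ((0:ℝ),(0:ℝ)) ((2:ℝ)^n, 0) (2^n) := GW_mono (Nat.le_succ n) (GW_bottom n)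
        have h2 := GW_translate_r hk
        have e1 : ((2:ℝ)^n, (0:ℝ)) + ((0:ℝ),(0:ℝ)) = ((2:ℝ)^n, 0) := by simp
        rw [e1] at h2
        exact GW_trans h1 h2
      · rw [lf_add, lf_rOff]
        push_cast
        rw [hkl]
    · obtain ⟨k, hk, hkl⟩ := ih hq
      refine ⟨2^n + k, ?_, ?_⟩
      · have h1 : GW (n+1) ((0:ℝ),(0:ℝ)) ((2:ℝ)^n/2, (2:ℝ)^n/2 * Real.sqrt 3) (2^n) :=
          GW_mono (Nat.le_succ n) (GW_left n)
        have h2 := GW_translate_t hk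
        have e1 : ((2:ℝ)^n/2, (2:ℝ)^n/2 * Real.sqrt 3) + ((0:ℝ),(0:ℝ))
            = ((2:ℝ)^n/2, (2:ℝ)^n/2 * Real.sqrt 3) := by simp
        rw [e1] at h2
        exact GW_trans h1 h2
      · rw [lf_add, lf_tOff]
        push_cast
        rw [hkl]

private lemma origin_mem_SGV : ((0:ℝ),(0:ℝ)) ∈ SGV :=
  Or.inl (Set.mem_iUnion.mpr ⟨0, origin_mem 0⟩)

/-- Convert a chain into a graph walk (positive copy). -/
private lemma GW_walk {m : ℕ} {p : ℝ × ℝ} {n : ℕ} (h : GW m ((0:ℝ),(0:ℝ)) p n) :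
    ∃ (hp : p ∈ SGV) (w : SGGraph.Walk oSG ⟨p, hp⟩), w.length = n := by
  induction h with
  | nil =>
    refine ⟨origin_mem_SGV, SimpleGraph.Walk.nil.copy rfl (Subtype.ext rfl), by simp⟩
  | @cons b c k h he ih =>
    obtain ⟨hb, w, hw⟩ := ih
    have hcV : c ∈ gasketV m := by
      rcases he with he | he
      · exact (gasketE_props he).2.1
      · exact (gasketE_props he).1
    have hbc : b ≠ c := by
      rcases he with he | he
      · exact (gasketE_props he).2.2.1
      · exact fun hh => (gasketE_props he).2.2.1 hh.symm
    have hc : c ∈ SGV := Or.inl (Set.mem_iUnion.mpr ⟨m, hcV⟩)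
    have hadj : SGGraph.Adj ⟨b, hb⟩ ⟨c, hc⟩ := by
      rw [SGGraph, SimpleGraph.fromRel_adj]
      constructor
      · intro hh; exact hbc (congrArg Subtype.val hh)
      · rcases he with he | he
        · exact Or.inl (Or.inl (Set.mem_iUnion.mpr ⟨m, he⟩))
        · exact Or.inr (Or.inl (Set.mem_iUnion.mpr ⟨m, he⟩))
    exact ⟨hc, w.concat hadj, by rw [SimpleGraph.Walk.length_concat, hw]⟩

/-- Convert a chain into a graph walk (negative copy). -/
private lemma GW_walk_neg {m : ℕ} {p : ℝ × ℝ} {n : ℕ} (h : GW m ((0:ℝ),(0:ℝ)) p n) :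
    ∃ (hp : -p ∈ SGV) (w : SGGraph.Walk oSG ⟨-p, hp⟩), w.length = n := by
  induction h with
  | nil =>
    have hz : -((0:ℝ),(0:ℝ)) = ((0:ℝ),(0:ℝ)) := by
      rw [Prod.neg_mk]; norm_num
    have h0 : -((0:ℝ),(0:ℝ)) ∈ SGV := by rw [hz]; exact origin_mem_SGV
    refine ⟨h0, SimpleGraph.Walk.nil.copy rfl (Subtype.ext hz.symm), by simp⟩
  | @cons b c k h he ih =>
    obtain ⟨hb, w, hw⟩ := ih
    have hcV : c ∈ gasketV m := by
      rcases he with he | he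
      · exact (gasketE_props he).2.1
      · exact (gasketE_props he).1
    have hbc : b ≠ c := by
      rcases he with he | he
      · exact (gasketE_props he).2.2.1
      · exact fun hh => (gasketE_props he).2.2.1 hh.symm
    have hc : -c ∈ SGV := Or.inr (by
      show -(-c) ∈ (⋃ n, gasketV n)
      rw [neg_neg]
      exact Set.mem_iUnion.mpr ⟨m, hcV⟩)
    have hadj : SGGraph.Adj ⟨-b, hb⟩ ⟨-c, hc⟩ := by
      rw [SGGraph, SimpleGraph.fromRel_adj]
      constructor
      · intro hh
        have := congrArg Subtype.val hh
        exact hbc (neg_injective this)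
      · rcases he with he | he
        · exact Or.inl (Or.inr ⟨(b, c), Set.mem_iUnion.mpr ⟨m, he⟩, rfl⟩)
        · exact Or.inr (Or.inr ⟨(c, b), Set.mem_iUnion.mpr ⟨m, he⟩, rfl⟩)
    exact ⟨hc, w.concat hadj, by rw [SimpleGraph.Walk.length_concat, hw]⟩

/-- The graph distance from the origin equals `|lf|`. -/
private lemma dist_eq_lf (y : SGV) : ((SGGraph.dist oSG y : ℕ) : ℝ) = |lf y.val| := by
  have key : ∃ (w : SGGraph.Walk oSG y), (w.length : ℝ) = |lf y.val| := by
    rcases y with ⟨p, hp | hp⟩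
    · obtain ⟨_, ⟨m, rfl⟩, hm⟩ := hp
      obtain ⟨n, hGW, hn⟩ := GW_main hm
      obtain ⟨hp', w, hw⟩ := GW_walk hGW
      refine ⟨w.copy rfl (Subtype.ext rfl), ?_⟩
      rw [SimpleGraph.Walk.length_copy, hw, hn]
      rw [abs_of_nonneg (gasketV_lf_nonneg hm)]
    · have hp' : -p ∈ (⋃ n, gasketV n) := hp
      obtain ⟨_, ⟨m, rfl⟩, hm⟩ := hp'
      obtain ⟨n, hGW, hn⟩ := GW_main hm
      obtain ⟨hp'', w, hw⟩ := GW_walk_neg hGW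
      have hpp : -(-p) = p := neg_neg p
      refine ⟨w.copy rfl (Subtype.ext (by show -(-p) = p; exact hpp)), ?_⟩
      rw [SimpleGraph.Walk.length_copy, hw, hn]
      have : lf p = - lf (-p) := by rw [lf_neg, neg_neg]
      rw [this, abs_neg, abs_of_nonneg (gasketV_lf_nonneg hm)]
  obtain ⟨w, hwl⟩ := key
  have hreach : SGGraph.Reachable oSG y := ⟨w⟩
  obtain ⟨w', hw'⟩ := hreach.exists_walk_length_eq_dist
  have hlow : |lf y.val| ≤ ((SGGraph.dist oSG y : ℕ) : ℝ) := by
    have := walk_lf_bound w'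
    have ho : lf (oSG.val) = 0 := lf_origin
    rw [ho] at this
    rw [← hw']
    calc |lf y.val| = |0 - lf y.val| := by rw [zero_sub, abs_neg]
    _ ≤ (w'.length : ℝ) := this
    _ = ((w'.length : ℕ) : ℝ) := by norm_num
  have hup : ((SGGraph.dist oSG y : ℕ) : ℝ) ≤ |lf y.val| := by
    rw [← hwl]
    exact_mod_cast Nat.cast_le.mpr (SimpleGraph.dist_le w)
  linarith

/-! ### Ball cardinality -/

private lemma lf_zero_unique {p : ℝ × ℝ} (hp : p ∈ Pset) (h : lf p = 0) : p = ((0:ℝ),(0:ℝ)) := by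
  obtain ⟨_, ⟨m, rfl⟩, hm⟩ := hp
  obtain ⟨h1, h2, _⟩ := gasketV_cone hm
  have hx : 0 ≤ p.1 := by nlinarith [s3_pos]
  have hy' : 0 ≤ p.2 * Real.sqrt 3 / 3 := by positivity
  simp only [lf] at h
  have hp1 : p.1 = 0 := by linarith
  have hp2 : p.2 = 0 := by nlinarith [s3_pos]
  exact Prod.ext hp1 hp2

private lemma subtype_ncard (Q : ℝ × ℝ → Prop) :
    {y : SGV | Q y.val}.ncard = {p | p ∈ SGV ∧ Q p}.ncard := by
  rw [← Set.ncard_image_of_injective {y : SGV | Q y.val} Subtype.val_injective]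
  congr 1
  ext p
  constructor
  · rintro ⟨⟨q, hq⟩, hQ, rfl⟩
    exact ⟨hq, hQ⟩
  · rintro ⟨hp, hQ⟩
    exact ⟨⟨p, hp⟩, hQ, rfl⟩

private lemma ball_eq_union (r : ℝ) :
    {p | p ∈ SGV ∧ |lf p| < r} = Lam r ∪ (-(Lam r)) := by
  ext p
  constructor
  · rintro ⟨hp | hp, hlt⟩
    · refine Or.inl ⟨hp, ?_⟩
      rwa [abs_of_nonneg (Pset_lf_nonneg hp)] at hlt
    · refine Or.inr ?_
      rw [Set.mem_neg]
      have hnp : -p ∈ Pset := hp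
      have h1 : 0 ≤ lf (-p) := Pset_lf_nonneg hnp
      have h2 : lf (-p) = - lf p := lf_neg p
      have habs : |lf p| = lf (-p) := by
        rw [h2]; rw [abs_of_nonpos (by linarith)]
      exact ⟨hnp, by rwa [habs] at hlt⟩
  · rintro (⟨hp, hlt⟩ | hp)
    · exact ⟨Or.inl hp, by rwa [abs_of_nonneg (Pset_lf_nonneg hp)]⟩
    · rw [Set.mem_neg] at hp
      obtain ⟨hnp, hlt⟩ := hp
      have h1 : 0 ≤ lf (-p) := Pset_lf_nonneg hnp
      have h2 : lf (-p) = - lf p := lf_neg p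
      have habs : |lf p| = lf (-p) := by
        rw [h2]; rw [abs_of_nonpos (by linarith)]
      refine ⟨Or.inr hnp, by rwa [habs]⟩

private lemma ball_inter {r : ℝ} (hr : 0 < r) :
    Lam r ∩ (-(Lam r)) = {((0:ℝ),(0:ℝ))} := by
  apply Set.Subset.antisymm
  · rintro p ⟨⟨hp, _⟩, hpn⟩
    rw [Set.mem_neg] at hpn
    obtain ⟨hnp, _⟩ := hpn
    have h1 : 0 ≤ lf p := Pset_lf_nonneg hp
    have h2 : 0 ≤ lf (-p) := Pset_lf_nonneg hnp
    rw [lf_neg] at h2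
    exact lf_zero_unique hp (le_antisymm (by linarith) h1)
  · rintro p hp
    rw [Set.mem_singleton_iff] at hp; subst hp
    have h0 : ((0:ℝ),(0:ℝ)) ∈ Lam r := ⟨origin_mem_Pset, by rw [lf_origin]; exact hr⟩
    refine ⟨h0, ?_⟩
    rw [Set.mem_neg]
    have : -((0:ℝ),(0:ℝ)) = ((0:ℝ),(0:ℝ)) := by rw [Prod.neg_mk]; norm_num
    rwa [this]

private lemma neg_set_ncard (S : Set (ℝ × ℝ)) : (-S).ncard = S.ncard := by
  have h : -S = (fun p : ℝ × ℝ => -p) '' S := by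
    ext p
    rw [Set.mem_neg]
    constructor
    · intro hp; exact ⟨-p, hp, neg_neg p⟩
    · rintro ⟨q, hq, rfl⟩; rwa [neg_neg]
  rw [h, Set.ncard_image_of_injective _ neg_injective]

private lemma neg_set_finite {S : Set (ℝ × ℝ)} (h : S.Finite) : (-S).Finite := by
  have he : -S = (fun p : ℝ × ℝ => -p) '' S := by
    ext p
    rw [Set.mem_neg]
    constructor
    · intro hp; exact ⟨-p, hp, neg_neg p⟩
    · rintro ⟨q, hq, rfl⟩; rwa [neg_neg]
  rw [he]; exact h.image _

/-- Cardinality of the ball of radius `r`. -/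
private lemma ball_ncard {r : ℝ} (hr : 0 < r) :
    {y : SGV | (SGGraph.dist oSG y : ℝ) < r}.ncard + 1 = 2 * Lf r := by
  have hset : {y : SGV | (SGGraph.dist oSG y : ℝ) < r} = {y : SGV | |lf y.val| < r} := by
    ext y
    rw [Set.mem_setOf_eq, Set.mem_setOf_eq, dist_eq_lf y]
  rw [hset, subtype_ncard (fun p => |lf p| < r)]
  have : {p | p ∈ SGV ∧ |lf p| < r} = Lam r ∪ (-(Lam r)) := ball_eq_union r
  rw [this]
  have hfin := Lam_finite r
  have h := Set.ncard_union_add_ncard_inter (Lam r) (-(Lam r)) hfin (neg_set_finite hfin)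
  rw [ball_inter hr, Set.ncard_singleton, neg_set_ncard] at h
  rw [Lf] at *
  omega

/-! ### Arithmetic helpers -/

private lemma pow_shift (b : ℤ) {p q r : ℕ} (h : p + q = r) : b^p * b^q = b^r := by
  rw [← pow_add, h]

private lemma exists_dyadic {x : ℕ} (hx : 2 ≤ x) : ∃ k, 2^k < x ∧ x ≤ 2^(k+1) := by
  refine ⟨Nat.log 2 (x-1), ?_, ?_⟩
  · have h := Nat.pow_log_le_self 2 (show x-1 ≠ 0 by omega)
    omega
  · have h := Nat.lt_pow_succ_log_self (by norm_num : 1 < 2) (x-1)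
    omega

private lemma Lf_rec_nat {j n : ℕ} (h1 : 2^j < n) (h2 : n ≤ 2^(j+1)) :
    Lf (n:ℝ) + 2 = (gasketV j).ncard + 2 * Lf ((n - 2^j : ℕ) : ℝ) := by
  have hc : ((n - 2^j : ℕ) : ℝ) = (n:ℝ) - 2^j := by
    rw [Nat.cast_sub (le_of_lt h1)]
    push_cast; ring
  rw [hc]
  apply Lf_rec
  · exact_mod_cast h1
  · exact_mod_cast h2

private lemma Lf_one_le {n : ℕ} (hn : 1 ≤ n) : 1 ≤ Lf (n:ℝ) := by
  have h1 : Lf 1 = 1 := Lf_unit one_pos le_rfl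
  calc 1 = Lf 1 := h1.symm
  _ ≤ Lf (n:ℝ) := Lf_mono (by exact_mod_cast hn)

private lemma Lf_le_pow {x j : ℕ} (h : x ≤ 2^j) : Lf (x:ℝ) ≤ Lf ((2:ℝ)^j) := by
  apply Lf_mono
  calc (x:ℝ) ≤ ((2^j : ℕ) : ℝ) := by exact_mod_cast h
  _ = (2:ℝ)^j := by push_cast; ring

/-- Self-similarity of deep-ball counts: the `S` lemma. -/
private lemma S_lemma {i y : ℕ} (hy : y < 2^i) (d : ℕ) :
    Lf ((2^(i+d) - y : ℕ) : ℝ) + 2^d * Lf ((2:ℝ)^i)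
      = Lf ((2:ℝ)^(i+d)) + 2^d * Lf ((2^i - y : ℕ) : ℝ) := by
  induction d with
  | zero =>
    have hc : ((2^(i+0) : ℕ) : ℝ) = (2:ℝ)^i := by push_cast; ring
    have hc2 : (2^(i+0) - y : ℕ) = (2^i - y : ℕ) := by norm_num
    rw [hc2]
    have : Lf ((2:ℝ)^(i+0)) = Lf ((2:ℝ)^i) := by norm_num
    rw [this]
    ring
  | succ e ih =>
    set j := i + e with hj
    have hyj : y < 2^j := lt_of_lt_of_le hy (Nat.pow_le_pow_right (by norm_num) (by omega))
    have hje : i + (e+1) = j + 1 := by omega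
    rw [hje]
    -- recursion at r = 2^(j+1) - y
    have hr1 : 2^j < 2^(j+1) - y := by
      have : (2:ℕ)^(j+1) = 2^j + 2^j := by ring
      omega
    have hr2 : 2^(j+1) - y ≤ 2^(j+1) := by omega
    have hrec1 := Lf_rec_nat hr1 hr2
    have hsub1 : (2^(j+1) - y - 2^j : ℕ) = 2^j - y := by
      have : (2:ℕ)^(j+1) = 2^j + 2^j := by ring
      omega
    rw [hsub1] at hrec1
    -- recursion at r = 2^(j+1)
    have hs1 : 2^j < 2^(j+1) := by
      have : (2:ℕ)^(j+1) = 2^j + 2^j := by ring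
      have : 0 < 2^j := Nat.pow_pos (by norm_num)
      omega
    have hrec2 := Lf_rec_nat hs1 (le_refl _)
    have hsub2 : (2^(j+1) - 2^j : ℕ) = 2^j := by
      have : (2:ℕ)^(j+1) = 2^j + 2^j := by ring
      omega
    rw [hsub2] at hrec2
    -- cast forms
    have hcast1 : ((2^(j+1) : ℕ) : ℝ) = (2:ℝ)^(j+1) := by push_cast; ring
    have hcast2 : ((2^j : ℕ) : ℝ) = (2:ℝ)^j := by push_cast; ring
    rw [hcast1] at hrec2
    rw [hcast2] at hrec2
    -- combine: hrec1, hrec2, ih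
    zify at hrec1 hrec2 ih ⊢
    linear_combination hrec1 - hrec2 + 2 * ih

/-! ### The dyadic core inequality -/

private lemma qlem (d : ℕ) (hd : 1 ≤ d) :
    2 * (3:ℤ)^d ≤ 2^d * 3^(d-1) + 2^(d+1) := by
  match d, hd with
  | 1, _ => norm_num
  | 2, _ => norm_num
  | (e+3), _ =>
    have h8 : (8:ℤ) ≤ 2^(e+3) := by
      calc (8:ℤ) = 2^3 := by norm_num
      _ ≤ 2^(e+3) := pow_le_pow_right₀ (by norm_num) (by omega)
    have h3 : (e+3) - 1 = e + 2 := by omega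
    have h2 : (3:ℤ)^(e+3) = 3 * 3^(e+2) := by ring
    rw [h3, h2]
    have hp : (0:ℤ) < 3^(e+2) := by positivity
    have hq : (0:ℤ) ≤ 2^(e+3+1) := by positivity
    nlinarith

private lemma qlem2 (d k' : ℕ) (hd : 1 ≤ d) :
    2 * (3:ℤ)^d * 3^(k'+2) ≤ 2^d * 3^(k'+d+1) + 2^(d+1) * 3^(k'+2) := by
  have h1 : (3:ℤ)^(k'+d+1) = 3^(d-1) * 3^(k'+2) := (pow_shift 3 (by omega)).symm
  rw [h1]
  have base := qlem d hd
  have hp : (0:ℤ) ≤ 3^(k'+2) := by positivity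
  nlinarith

set_option maxHeartbeats 1000000 in
/-- The dyadic annulus bound. -/
private lemma dyadic_core (k : ℕ) : ∀ m n : ℕ, m ≤ k → 2^k < n → n ≤ 2^(k+1) →
    (3:ℤ)^(m+1) * (Lf (n:ℝ) : ℤ) ≤ 3^(m+1) * (Lf ((n - 2^(k+1-m) : ℕ) : ℝ) : ℤ)
      + 2^(m+2) * (2 * (Lf (n:ℝ) : ℤ) - 1) := by
  induction k using Nat.strong_induction_on with
  | _ k IH =>
  intro m n hmk hn1 hn2
  have hpk : 0 < (2:ℕ)^k := Nat.pow_pos (by norm_num)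
  have hn1' : 1 ≤ n := by omega
  have hL1 : (1:ℤ) ≤ (Lf (n:ℝ) : ℤ) := by exact_mod_cast Lf_one_le hn1'
  have hpk1 : (2:ℕ)^(k+1) = 2^k + 2^k := by ring
  by_cases hm0 : m = 0
  · subst hm0
    have hb0 : (0:ℤ) ≤ (Lf ((n - 2^(k+1-0) : ℕ) : ℝ) : ℤ) := by positivity
    have h31 : (3:ℤ)^(0+1) = 3 := by norm_num
    have h22 : (2:ℤ)^(0+2) = 4 := by norm_num
    rw [h31, h22]
    nlinarith [hb0, hL1]
  have hm1 : 1 ≤ m := by omega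
  have hik : k + 1 - m ≤ k := by omega
  have hWk : 2^(k+1-m) ≤ 2^k := Nat.pow_le_pow_right (by norm_num) hik
  have hW2 : 2 ≤ 2^(k+1-m) := by
    calc 2 = 2^1 := rfl
    _ ≤ 2^(k+1-m) := Nat.pow_le_pow_right (by norm_num) (by omega)
  have hx1 : 1 ≤ n - 2^k := by omega
  have hxk : n - 2^k ≤ 2^k := by omega
  have hrecn := Lf_rec_nat hn1 hn2
  have hcard := gasketV_ncard k
  by_cases hcase : 2^(k+1-m) < n - 2^k
  · -- CASE A : the annulus fits in the two upper cells
    obtain ⟨k', hk'1, hk'2⟩ := exists_dyadic (show 2 ≤ n - 2^k by omega)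
    have hk'k : k' < k := by
      have h1 : (2:ℕ)^k' < 2^k := lt_of_lt_of_le hk'1 hxk
      exact (Nat.pow_lt_pow_iff_right (by norm_num)).mp h1
    have hik' : k + 1 - m ≤ k' := by
      have h1 : (2:ℕ)^(k+1-m) < 2^(k'+1) := lt_of_lt_of_le hcase hk'2
      have := (Nat.pow_lt_pow_iff_right (by norm_num : 1 < 2)).mp h1
      omega
    have hm'1 : 1 ≤ m - (k - k') := by omega
    have hm'k' : m - (k - k') ≤ k' := by omega
    have him' : k' + 1 - (m - (k - k')) = k + 1 - m := by omega
    -- recursion at n − 2^(k+1−m)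
    have hnW1 : 2^k < n - 2^(k+1-m) := by omega
    have hnW2 : n - 2^(k+1-m) ≤ 2^(k+1) := by omega
    have hrecnW := Lf_rec_nat hnW1 hnW2
    have hxw : n - 2^(k+1-m) - 2^k = n - 2^k - 2^(k+1-m) := by omega
    rw [hxw] at hrecnW
    have hIH := IH k' hk'k (m - (k - k')) (n - 2^k) hm'k' hk'1 hk'2
    rw [him'] at hIH
    have hTb : Lf ((n - 2^k : ℕ):ℝ) ≤ Lf ((2:ℝ)^(k'+1)) := Lf_le_pow hk'2
    have hlam := Lf_pow (k'+1)
    -- move to ℤ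
    set a := (Lf (n:ℝ) : ℤ) with ha
    set b := (Lf ((n - 2^(k+1-m) : ℕ) : ℝ) : ℤ) with hb
    set c := (Lf ((n - 2^k : ℕ) : ℝ) : ℤ) with hc
    set e := (Lf ((n - 2^k - 2^(k+1-m) : ℕ) : ℝ) : ℤ) with he
    set lam := (Lf ((2:ℝ)^(k'+1)) : ℤ) with hlm
    set hV := ((gasketV k).ncard : ℤ) with hvv
    have Hn : a + 2 = hV + 2*c := by rw [ha, hc, hvv]; exact_mod_cast hrecn
    have HnW : b + 2 = hV + 2*e := by rw [hb, he, hvv]; exact_mod_cast hrecnW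
    have Hcard : 2*hV = 3^(k+1) + 3 := by rw [hvv]; exact_mod_cast hcard
    have HIH : (3:ℤ)^((m-(k-k'))+1) * c ≤ 3^((m-(k-k'))+1) * e
        + 2^((m-(k-k'))+2) * (2*c - 1) := by
      rw [hc, he]; exact_mod_cast hIH
    have HT : c ≤ lam := by rw [hc, hlm]; exact_mod_cast hTb
    have Hlam : 2*lam + 2^(k'+2) = 3^(k'+2) + 1 := by rw [hlm]; exact_mod_cast hlam
    have Hq2 := qlem2 (k - k') k' (by omega)
    rw [show k' + (k - k') + 1 = k + 1 from by omega] at Hq2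
    -- identities
    have id3 : (3:ℤ)^(k-k') * 3^((m-(k-k'))+1) = 3^(m+1) := pow_shift 3 (by omega)
    have id2 : (2:ℤ)^(k-k') * 2^((m-(k-k'))+2) = 2^(m+2) := pow_shift 2 (by omega)
    rw [← id3, ← id2]
    have hps : (2:ℤ)^(k-k'+1) = 2*2^(k-k') := by rw [pow_succ]; ring
    rw [hps] at Hq2
    have e_ab : a - b = 2*c - 2*e := by linarith
    have h2a : 2*a - 1 = 3^(k+1) + 2*(2*c-1) := by linarith
    have s3w : 2*c - 1 ≤ (3:ℤ)^(k'+2) := by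
      have hp : (0:ℤ) ≤ 2^(k'+2) := by positivity
      linarith
    have ssign : (2:ℤ)^(k-k') ≤ 3^(k-k') := by
      apply pow_le_pow_left₀ (by norm_num) (by norm_num)
    have hP3nn : (0:ℤ) ≤ 3^(k-k') := by positivity
    have hQ2nn : (0:ℤ) ≤ 2^((m-(k-k'))+2) := by positivity
    clear hrecn hrecnW hcard hlam hTb hIH IH Hn HnW Hcard HT Hlam
    clear ha hb hc he hlm hvv id3 id2 hps
    generalize hP3 : (3:ℤ)^(k-k') = P3 at Hq2 ssign hP3nn ⊢
    generalize hP2 : (2:ℤ)^(k-k') = P2 at Hq2 ssign ⊢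
    generalize hQ3 : (3:ℤ)^((m-(k-k'))+1) = Q3 at HIH ⊢
    generalize hQ2 : (2:ℤ)^((m-(k-k'))+2) = Q2 at HIH hQ2nn ⊢
    generalize hC : (3:ℤ)^(k+1) = C at Hq2 h2a
    generalize hS : (3:ℤ)^(k'+2) = S at Hq2 s3w
    have s1 : P3*(Q3*c) ≤ P3*(Q3*e + Q2*(2*c-1)) := mul_le_mul_of_nonneg_left HIH hP3nn
    have s4 : (2*P3 - 2*P2)*(2*c-1) ≤ (2*P3-2*P2)*S :=
      mul_le_mul_of_nonneg_left s3w (by linarith)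
    have s5 : 2*P3*(2*c-1) ≤ P2*C + 2*P2*(2*c-1) := by nlinarith [s4, Hq2]
    have s6 : Q2*(2*P3*(2*c-1)) ≤ Q2*(P2*C + 2*P2*(2*c-1)) :=
      mul_le_mul_of_nonneg_left s5 hQ2nn
    have e_abm : P3*Q3*(a-b) = P3*Q3*(2*c-2*e) := by rw [e_ab]
    have e_2am : P2*Q2*(2*a-1) = P2*Q2*(C + 2*(2*c-1)) := by rw [h2a]
    linarith [s1, s6, e_abm, e_2am]
  · -- CASE B : the annulus reaches into the lower cell
    push_neg at hcase
    by_cases hmeq1 : m = 1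
    · subst hmeq1
      have hee : k + 1 - 1 = k := by omega
      rw [hee]
      have hc1 : (1:ℤ) ≤ (Lf ((n - 2^k : ℕ):ℝ) : ℤ) := by exact_mod_cast Lf_one_le hx1
      have h9 : (3:ℤ)^(1+1) = 9 := by norm_num
      have h8 : (2:ℤ)^(1+2) = 8 := by norm_num
      rw [h9, h8]
      nlinarith [hL1, hc1]
    have hm2 : 2 ≤ m := by omega
    obtain ⟨y, hyY, hnW, hxy⟩ :
        ∃ y, y < 2^(k+1-m) ∧ n - 2^(k+1-m) = 2^k - y ∧ 2^(k+1-m) - y = n - 2^k :=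
      ⟨2^(k+1-m) - (n - 2^k), by omega, by omega, by omega⟩
    have hS := S_lemma hyY (m-1)
    rw [show (k+1-m) + (m-1) = k from by omega] at hS
    rw [hxy] at hS
    rw [← hnW] at hS
    have hLamk := Lf_pow k
    have hLami := Lf_pow (k+1-m)
    -- to ℤ
    set a := (Lf (n:ℝ) : ℤ) with ha
    set b := (Lf ((n - 2^(k+1-m) : ℕ) : ℝ) : ℤ) with hb
    set c := (Lf ((n - 2^k : ℕ) : ℝ) : ℤ) with hc
    set Lk := (Lf ((2:ℝ)^k) : ℤ) with hlk
    set Li := (Lf ((2:ℝ)^(k+1-m)) : ℤ) with hli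
    set hV := ((gasketV k).ncard : ℤ) with hvv
    have Hn : a + 2 = hV + 2*c := by rw [ha, hc, hvv]; exact_mod_cast hrecn
    have Hcard : 2*hV = 3^(k+1) + 3 := by rw [hvv]; exact_mod_cast hcard
    have HS : b + 2^(m-1)*Li = Lk + 2^(m-1)*c := by
      rw [hb, hli, hlk, hc]; exact_mod_cast hS
    have HLk : 2*Lk + 2^(k+1) = 3^(k+1) + 1 := by rw [hlk]; exact_mod_cast hLamk
    have HLi : 2*Li + 2^((k+1-m)+1) = 3^((k+1-m)+1) + 1 := by rw [hli]; exact_mod_cast hLami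
    have hc1 : (1:ℤ) ≤ c := by rw [hc]; exact_mod_cast Lf_one_le hx1
    have hcLi : c ≤ Li := by
      rw [hc, hli]; exact_mod_cast Lf_le_pow hcase
    have h2a : 2*a = 3^(k+1) - 1 + 4*c := by linarith
    have hLk2 : 2*Lk = 3^(k+1) + 1 - 2^(k+1) := by linarith
    have hLi2 : 2*Li = 3^((k+1-m)+1) + 1 - 2^((k+1-m)+1) := by linarith
    by_cases hmeq2 : m = 2
    · subst hmeq2
      have he1 : k + 1 - 2 = k - 1 := by omega
      rw [he1] at hLi2
      have h27 : (3:ℤ)^(2+1) = 27 := by norm_num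
      have h16 : (2:ℤ)^(2+2) = 16 := by norm_num
      have h2' : (2:ℤ)^(2-1) = 2 := by norm_num
      rw [h27, h16]
      rw [h2'] at HS
      have hek : k - 1 + 1 = k := by omega
      rw [hek] at hLi2
      have hp31 : (3:ℤ)^(k+1) = 3*3^k := by rw [pow_succ]; ring
      have hp21 : (2:ℤ)^(k+1) = 2*2^k := by rw [pow_succ]; ring
      have hp32 : (2:ℤ)^k ≤ 3^k := by
        apply pow_le_pow_left₀ (by norm_num) (by norm_num)
      have hp3p : (1:ℤ) ≤ 3^k := one_le_pow₀ (by norm_num)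
      linarith [HS, h2a, hLk2, hLi2, hc1, hp32, hp3p, hp31.le, hp31.ge, hp21.le, hp21.ge]
    · -- m ≥ 3
      have hm3 : 3 ≤ m := by omega
      have idAE9 : (3:ℤ)^(m+1) * 3^((k+1-m)+1) = 9*3^(k+1) := by
        rw [pow_shift 3 (show (m+1)+((k+1-m)+1) = (k+1)+2 by omega), pow_add]
        norm_num
        ring
      have idBF : (2:ℤ)^(m-1) * 2^((k+1-m)+1) = 2^(k+1) := pow_shift 2 (by omega)
      have id8B : (2:ℤ)^(m+2) = 8*2^(m-1) := by
        rw [← pow_shift 2 (show 3+(m-1) = m+2 by omega)]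
        norm_num
      have hAC : (3:ℤ)^(m+1) ≤ 3^(k+1) :=
        pow_le_pow_right₀ (by norm_num) (by omega)
      have hB4 : (4:ℤ) ≤ 2^(m-1) := by
        calc (4:ℤ) = 2^2 := by norm_num
        _ ≤ 2^(m-1) := pow_le_pow_right₀ (by norm_num) (by omega)
      have hAnn : (0:ℤ) ≤ 3^(m+1) := by positivity
      have hBnn : (0:ℤ) ≤ 2^(m-1) := by positivity
      have hCnn : (0:ℤ) ≤ 3^(k+1) := by positivity
      have hFnn : (0:ℤ) ≤ 2^((k+1-m)+1) := by positivity
      rw [id8B]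
      clear hrecn hcard hS hLamk hLami IH Hn Hcard HLk HLi
      clear ha hb hc hlk hli hvv id8B
      generalize hA : (3:ℤ)^(m+1) = A at idAE9 hAC hAnn ⊢
      generalize hB : (2:ℤ)^(m-1) = B at idBF hB4 hBnn HS ⊢
      generalize hC : (3:ℤ)^(k+1) = C at idAE9 hAC hCnn h2a hLk2
      generalize hD : (2:ℤ)^(k+1) = D at idBF hLk2
      generalize hE : (3:ℤ)^((k+1-m)+1) = E at idAE9 hLi2
      generalize hF : (2:ℤ)^((k+1-m)+1) = F at idBF hLi2 hFnn
      -- multiplied identities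
      have t1 : A*(b + B*Li) = A*(Lk + B*c) := by rw [HS]
      have t2 : A*(2*Lk) = A*(C + 1 - D) := by rw [hLk2]
      have t3 : (A*B)*(2*Li) = (A*B)*(E + 1 - F) := by rw [hLi2]
      have t3b : A*(2*Li) = A*(E + 1 - F) := by rw [hLi2]
      have t4 : B*(A*E) = B*(9*C) := by rw [idAE9]
      have t5 : A*(B*F) = A*D := by rw [← idBF]
      have t6 : (8*B)*(2*a) = (8*B)*(C - 1 + 4*c) := by rw [h2a]
      have t7 : A*(2*a) = A*(C - 1 + 4*c) := by rw [h2a]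
      have s_cLi : A*(2*c) ≤ A*(2*Li) :=
        mul_le_mul_of_nonneg_left (by linarith) hAnn
      have i3 : (0:ℤ) ≤ A*F := mul_nonneg hAnn hFnn
      have i4 : (0:ℤ) ≤ A*B*(c-1) := mul_nonneg (mul_nonneg hAnn hBnn) (by linarith)
      have i5 : (0:ℤ) ≤ B*(c-1) := mul_nonneg hBnn (by linarith)
      have i6 : (0:ℤ) ≤ (7*B - 18)*C := mul_nonneg (by linarith) hCnn
      have i7 : (0:ℤ) ≤ A*B := mul_nonneg hAnn hBnn
      linarith [t1, t2, t3, t3b, t4, t5, t6, t7, s_cLi, i3, i4, i5, i6, i7, idAE9]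

/-! ### rpow facts -/

private lemma gamma_nonneg : 0 ≤ Real.log 3 / Real.log 2 - 1 := by
  have hlog2pos : (0:ℝ) < Real.log 2 := Real.log_pos (by norm_num)
  have hlog23 : Real.log 2 ≤ Real.log 3 := Real.log_le_log (by norm_num) (by norm_num)
  rw [sub_nonneg, le_div_iff₀ hlog2pos]
  linarith

private lemma two_rpow_gamma : (2:ℝ) ^ (Real.log 3 / Real.log 2 - 1) = 3/2 := by
  have hlog2pos : (0:ℝ) < Real.log 2 := Real.log_pos (by norm_num)
  rw [Real.rpow_def_of_pos (by norm_num : (0:ℝ) < 2),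
      show Real.log 2 * (Real.log 3 / Real.log 2 - 1) = Real.log 3 - Real.log 2 by
        field_simp,
      Real.exp_sub, Real.exp_log (by norm_num : (0:ℝ) < 3),
      Real.exp_log (by norm_num : (0:ℝ) < 2)]

private lemma eps_rpow_bound {ε : ℝ} {m : ℕ} (hεpos : 0 < ε)
    (hlow : ((2:ℝ)^(m+1))⁻¹ ≤ ε) :
    ((2:ℝ)/3)^(m+1) ≤ ε ^ (Real.log 3 / Real.log 2 - 1) := by
  have h1 : (((2:ℝ)^(m+1))⁻¹) ^ (Real.log 3 / Real.log 2 - 1)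
      ≤ ε ^ (Real.log 3 / Real.log 2 - 1) :=
    Real.rpow_le_rpow (by positivity) hlow gamma_nonneg
  have h2 : (((2:ℝ)^(m+1))⁻¹) ^ (Real.log 3 / Real.log 2 - 1) = ((2:ℝ)/3)^(m+1) := by
    rw [← Real.rpow_natCast (2:ℝ) (m+1)]
    rw [← Real.rpow_neg (by norm_num : (0:ℝ) ≤ 2)]
    rw [← Real.rpow_mul (by norm_num : (0:ℝ) ≤ 2)]
    rw [mul_comm, Real.rpow_mul (by norm_num : (0:ℝ) ≤ 2)]
    rw [two_rpow_gamma]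
    rw [Real.rpow_neg (by norm_num : (0:ℝ) ≤ 3/2)]
    rw [Real.rpow_natCast]
    rw [← inv_pow]
    norm_num
  rw [← h2]
  exact h1

end AnnulusProof

/-- On the doubly infinite Sierpinski gasket graph, with `α = log 3 / log 2`, for every
`1/n < ε < 1` the annulus satisfies `|B_o(n)| - |B_o(n(1-ε))| ≤ 4 ε^{α-1} |B_o(n)|`, where
`B_o(r)` is the open ball of radius `r` about the origin in the graph metric. -/
theorem annulus_bound (n : ℕ) (ε : ℝ) (hε : 1 / (n : ℝ) < ε) (hε1 : ε < 1) :
    (({y : SGV | (SGGraph.dist oSG y : ℝ) < (n : ℝ)}.ncard : ℝ) -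
        ({y : SGV | (SGGraph.dist oSG y : ℝ) < (n : ℝ) * (1 - ε)}.ncard : ℝ)) ≤
      4 * ε ^ (Real.log 3 / Real.log 2 - 1) *
        ({y : SGV | (SGGraph.dist oSG y : ℝ) < (n : ℝ)}.ncard : ℝ) := by
  -- dispose of `n = 0` and `n = 1`
  rcases Nat.lt_or_ge n 2 with hn2 | hn2
  · interval_cases n
    · -- n = 0 : both balls are empty
      have hε0 : 0 < ε := by
        have : (1:ℝ)/(0:ℕ) = 0 := by norm_num
        rw [this] at hε; exact hε
      have hempty : ∀ r : ℝ, r ≤ 0 → {y : SGV | (SGGraph.dist oSG y : ℝ) < r} = ∅ := by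
        intro r hr
        ext y
        simp only [Set.mem_setOf_eq, Set.mem_empty_iff_false, iff_false, not_lt]
        calc r ≤ 0 := hr
        _ ≤ (SGGraph.dist oSG y : ℝ) := by positivity
      rw [hempty ((0:ℕ):ℝ) (by norm_num), hempty (((0:ℕ):ℝ) * (1 - ε)) (by norm_num)]
      simp
    · -- n = 1 : vacuous
      exfalso
      have : (1:ℝ)/(1:ℕ) = 1 := by norm_num
      rw [this] at hε
      linarith
  -- main case : n ≥ 2
  have hεpos : 0 < ε := by
    have h1 : (0:ℝ) < 1/(n:ℝ) := by positivity
    linarith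
  obtain ⟨k, hk1, hk2⟩ := exists_dyadic hn2
  -- choose m with 2^{-(m+1)} < ε ≤ 2^{-m}
  have hinv1 : (1:ℝ) ≤ ε⁻¹ := one_le_inv_iff₀.mpr ⟨hεpos, le_of_lt hε1⟩
  have hinv0 : (0:ℝ) ≤ ε⁻¹ := by positivity
  have hbm1 : 1 ≤ ⌊ε⁻¹⌋₊ := Nat.le_floor (by exact_mod_cast hinv1)
  have h2m : 2^(Nat.log 2 ⌊ε⁻¹⌋₊) ≤ ⌊ε⁻¹⌋₊ := Nat.pow_log_le_self 2 (by omega)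
  have h2m' : ⌊ε⁻¹⌋₊ < 2^(Nat.log 2 ⌊ε⁻¹⌋₊ + 1) :=
    Nat.lt_pow_succ_log_self one_lt_two _
  have hεle : ε ≤ ((2:ℝ)^(Nat.log 2 ⌊ε⁻¹⌋₊))⁻¹ := by
    have h1 : ((2:ℝ)^(Nat.log 2 ⌊ε⁻¹⌋₊)) ≤ ε⁻¹ := by
      calc ((2:ℝ)^(Nat.log 2 ⌊ε⁻¹⌋₊)) = ((2^(Nat.log 2 ⌊ε⁻¹⌋₊) : ℕ) : ℝ) := by push_cast; ring
      _ ≤ (⌊ε⁻¹⌋₊ : ℝ) := by exact_mod_cast h2m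
      _ ≤ ε⁻¹ := Nat.floor_le hinv0
    have hp : (0:ℝ) < (2:ℝ)^(Nat.log 2 ⌊ε⁻¹⌋₊) := by positivity
    have h2 := inv_anti₀ hp h1
    rwa [inv_inv] at h2
  have hεgt : ((2:ℝ)^(Nat.log 2 ⌊ε⁻¹⌋₊ + 1))⁻¹ ≤ ε := by
    have h1 : ε⁻¹ < (2:ℝ)^(Nat.log 2 ⌊ε⁻¹⌋₊ + 1) := by
      calc ε⁻¹ < (⌊ε⁻¹⌋₊ : ℝ) + 1 := Nat.lt_floor_add_one ε⁻¹
      _ ≤ (2:ℝ)^(Nat.log 2 ⌊ε⁻¹⌋₊ + 1) := by exact_mod_cast h2m'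
    have hp : (0:ℝ) < (2:ℝ)^(Nat.log 2 ⌊ε⁻¹⌋₊ + 1) := by positivity
    have h2 := inv_anti₀ (by positivity : (0:ℝ) < ε⁻¹) (le_of_lt h1)
    rwa [inv_inv] at h2
  have hn_pos : (0:ℝ) < (n:ℝ) := by exact_mod_cast (show 0 < n by omega)
  have hmk : Nat.log 2 ⌊ε⁻¹⌋₊ ≤ k := by
    have h1 : ε⁻¹ < (n:ℝ) := by
      have h2 : (0:ℝ) < 1/(n:ℝ) := by positivity
      have h3 := inv_strictAnti₀ h2 hε
      rwa [one_div, inv_inv] at h3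
    have h2 : (⌊ε⁻¹⌋₊ : ℝ) < (n:ℝ) := lt_of_le_of_lt (Nat.floor_le hinv0) h1
    have h3 : ⌊ε⁻¹⌋₊ < n := by exact_mod_cast h2
    have h4 : 2^(Nat.log 2 ⌊ε⁻¹⌋₊) < 2^(k+1) := by omega
    have h5 := (Nat.pow_lt_pow_iff_right (by norm_num : 1 < 2)).mp h4
    omega
  have hs_pos : (0:ℝ) < (n:ℝ)*(1-ε) := by nlinarith
  have hBn := ball_ncard hn_pos
  have hBs := ball_ncard hs_pos
  -- the deep ball contains the dyadic deep ball
  have hcast : ((n - 2^(k+1-(Nat.log 2 ⌊ε⁻¹⌋₊)) : ℕ) : ℝ) ≤ (n:ℝ)*(1-ε) := by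
    have hnε : (n:ℝ)*ε ≤ (2:ℝ)^(k+1-(Nat.log 2 ⌊ε⁻¹⌋₊)) := by
      have hWpow : (2:ℝ)^(k+1-(Nat.log 2 ⌊ε⁻¹⌋₊)) * 2^(Nat.log 2 ⌊ε⁻¹⌋₊) = 2^(k+1) := by
        rw [← pow_add]
        congr 1
        omega
      have hn2k : (n:ℝ) ≤ (2:ℝ)^(k+1) := by
        calc (n:ℝ) ≤ ((2^(k+1) : ℕ) : ℝ) := by exact_mod_cast hk2
        _ = (2:ℝ)^(k+1) := by push_cast; ring
      have hεm : ε * (2:ℝ)^(Nat.log 2 ⌊ε⁻¹⌋₊) ≤ 1 := by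
        have hp : (0:ℝ) < (2:ℝ)^(Nat.log 2 ⌊ε⁻¹⌋₊) := by positivity
        rw [← inv_mul_cancel₀ (ne_of_gt hp)]
        exact mul_le_mul_of_nonneg_right hεle (le_of_lt hp)
      have hp : (0:ℝ) < (2:ℝ)^(Nat.log 2 ⌊ε⁻¹⌋₊) := by positivity
      nlinarith [mul_le_mul hn2k hεm (by positivity) (by positivity)]
    rcases le_or_gt (2^(k+1-(Nat.log 2 ⌊ε⁻¹⌋₊))) n with hWn | hWn
    · rw [Nat.cast_sub hWn]
      have : ((2^(k+1-(Nat.log 2 ⌊ε⁻¹⌋₊)) : ℕ) : ℝ) = (2:ℝ)^(k+1-(Nat.log 2 ⌊ε⁻¹⌋₊)) := by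
        push_cast; ring
      rw [this]
      nlinarith
    · rw [Nat.sub_eq_zero_of_le (le_of_lt hWn)]
      norm_num
      nlinarith
  have hmono : Lf ((n - 2^(k+1-(Nat.log 2 ⌊ε⁻¹⌋₊)) : ℕ) : ℝ) ≤ Lf ((n:ℝ)*(1-ε)) :=
    Lf_mono hcast
  have hcore := dyadic_core k (Nat.log 2 ⌊ε⁻¹⌋₊) n hmk hk1 hk2
  have hcoreR : (3:ℝ)^(Nat.log 2 ⌊ε⁻¹⌋₊+1) * (Lf (n:ℝ) : ℝ)
      ≤ 3^(Nat.log 2 ⌊ε⁻¹⌋₊+1) * (Lf ((n - 2^(k+1-(Nat.log 2 ⌊ε⁻¹⌋₊)) : ℕ) : ℝ) : ℝ)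
        + 2^(Nat.log 2 ⌊ε⁻¹⌋₊+2) * (2 * (Lf (n:ℝ) : ℝ) - 1) := by
    exact_mod_cast hcore
  have hLn1 : 1 ≤ Lf (n:ℝ) := Lf_one_le (by omega)
  have hXn : ({y : SGV | (SGGraph.dist oSG y : ℝ) < (n:ℝ)}.ncard : ℝ)
      = 2*(Lf (n:ℝ) : ℝ) - 1 := by
    have h := congrArg (fun z : ℕ => (z:ℝ)) hBn
    push_cast at h
    linarith
  have hXs : ({y : SGV | (SGGraph.dist oSG y : ℝ) < (n:ℝ)*(1-ε)}.ncard : ℝ)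
      = 2*(Lf ((n:ℝ)*(1-ε)) : ℝ) - 1 := by
    have h := congrArg (fun z : ℕ => (z:ℝ)) hBs
    push_cast at h
    linarith
  rw [hXn, hXs]
  have hεγ : ((2:ℝ)/3)^(Nat.log 2 ⌊ε⁻¹⌋₊+1) ≤ ε ^ (Real.log 3 / Real.log 2 - 1) :=
    eps_rpow_bound hεpos hεgt
  have hp3 : (0:ℝ) < 3^(Nat.log 2 ⌊ε⁻¹⌋₊+1) := by positivity
  rw [← mul_le_mul_iff_right₀ hp3]
  have hq4 : ((2:ℝ)/3)^(Nat.log 2 ⌊ε⁻¹⌋₊+1)*3^(Nat.log 2 ⌊ε⁻¹⌋₊+1)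
      = 2^(Nat.log 2 ⌊ε⁻¹⌋₊+1) := by
    rw [div_pow]
    field_simp
  have hεγ' : (2:ℝ)^(Nat.log 2 ⌊ε⁻¹⌋₊+1)
      ≤ ε ^ (Real.log 3 / Real.log 2 - 1) * 3^(Nat.log 2 ⌊ε⁻¹⌋₊+1) := by
    have h := mul_le_mul_of_nonneg_right hεγ (le_of_lt hp3)
    rwa [hq4] at h
  have hLn1R : (1:ℝ) ≤ (Lf (n:ℝ) : ℝ) := by exact_mod_cast hLn1
  have hmul2 : (2:ℝ)^(Nat.log 2 ⌊ε⁻¹⌋₊+1)*(2*(Lf (n:ℝ):ℝ) - 1)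
      ≤ (ε ^ (Real.log 3 / Real.log 2 - 1) * 3^(Nat.log 2 ⌊ε⁻¹⌋₊+1))*(2*(Lf (n:ℝ):ℝ) - 1) :=
    mul_le_mul_of_nonneg_right hεγ' (by linarith)
  have hq1m : (3:ℝ)^(Nat.log 2 ⌊ε⁻¹⌋₊+1)*((Lf ((n - 2^(k+1-(Nat.log 2 ⌊ε⁻¹⌋₊)) : ℕ) : ℝ) : ℝ))
      ≤ 3^(Nat.log 2 ⌊ε⁻¹⌋₊+1)*((Lf ((n:ℝ)*(1-ε)) : ℝ)) :=
    mul_le_mul_of_nonneg_left (by exact_mod_cast hmono) (le_of_lt hp3)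
  have hpow22 : (2:ℝ)^(Nat.log 2 ⌊ε⁻¹⌋₊+2) = 2*2^(Nat.log 2 ⌊ε⁻¹⌋₊+1) := by ring
  rw [hpow22] at hcoreR
  linarith [hcoreR, hq1m, hmul2]

end IDLA
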